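/- Let ψ ∈ ℂ^{n_max+1} be a nonzero vector such that ⟨ψ| D_α |n̄⟩ = 0 for all α ∈ ℂ, where D_α = exp(α a† − α* a) with a the truncated annihilation operator. Then ψ = 0, a contradiction; i.e., the family {D_α|n̄⟩ : α ∈ ℂ} spans ℂ^{n_max+1}. -/

import Mathlib

open Matrix

attribute [local instance] Matrix.linftyOpNormedAddCommGroup Matrix.linftyOpNormedRing
  Matrix.linftyOpNormedAlgebra

private lemma keyA' {n : ℕ} (M : Matrix (Fin (n+1)) (Fin (n+1)) ℂ)
    (c : Matrix (Fin (n+1)) (Fin (n+1)) ℂ →ₗ[ℂ] ℂ)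
    (h : ∀ t : ℝ, c (NormedSpace.exp ((t : ℂ) • M)) = 0) (j : ℕ) : c (M ^ j) = 0 := by
  have hco : ∀ t : ℝ, (t : ℂ) • M = t • M := fun t => by
    rw [← algebraMap_smul ℂ t M]; norm_num
  have hexp : ∀ t : ℝ, NormedSpace.exp ((t : ℂ) • M) = NormedSpace.exp (t • M) := by
    intro t; rw [hco]
  set g : ℕ → ℝ → ℂ := fun j t => c (M ^ j * NormedSpace.exp (t • M)) with hg
  have hg0 : ∀ t, g 0 t = 0 := by
    intro t; simpa [hg, ← hexp] using h t
  have hderiv : ∀ j t, HasDerivAt (g j) (g (j+1) t) t := by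
    intro j t
    have hL : ∀ (X : Matrix (Fin (n+1)) (Fin (n+1)) ℂ),
        ((LinearMap.toContinuousLinearMap
          (c.comp (LinearMap.mulLeft ℂ (M ^ j)))).restrictScalars ℝ) X = c (M ^ j * X) := by
      intro X; rfl
    have hE := hasDerivAt_exp_smul_const' (𝕂 := ℝ) M t
    have := ((LinearMap.toContinuousLinearMap
          (c.comp (LinearMap.mulLeft ℂ (M ^ j)))).restrictScalars ℝ).hasFDerivAt.comp_hasDerivAt
          t hE
    simp only [Function.comp_def, hL] at this
    replace this := this.congr_deriv (hL (M * NormedSpace.exp (t • M)))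
    simp only [hg, pow_succ, mul_assoc]
    exact this
  have hall : ∀ j t, g j t = 0 := by
    intro j
    induction j with
    | zero => exact hg0
    | succ j ih =>
      intro t
      have hd := hderiv j t
      rw [show g j = fun _ => (0 : ℂ) from funext ih] at hd
      exact hd.unique (hasDerivAt_const t 0)
  have := hall j 0
  simpa [hg] using this

private lemma pow_conj' {R : Type*} [Ring R] {A U B : R} (h : A * U = U * B) (j : ℕ) :
    A ^ j * U = U * B ^ j := by
  induction j with
  | zero => simp
  | succ j ih => rw [pow_succ', pow_succ', mul_assoc, ih, ← mul_assoc, h, mul_assoc]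

private lemma sum_pick' {n : ℕ} (w : Fin n → ℂ) (k : ℕ) (c : ℂ) :
    (∑ l : Fin n, (if (l : ℕ) = k then c else 0) * w l)
      = if h : k < n then c * w ⟨k, h⟩ else 0 := by
  split_ifs with h
  · rw [show (fun l : Fin n => (if (l : ℕ) = k then c else 0) * w l)
        = fun l : Fin n => if l = ⟨k, h⟩ then c * w l else 0 from ?_]
    · rw [Finset.sum_ite_eq' Finset.univ ⟨k, h⟩ (fun l => c * w l)]
      simp
    · funext l
      by_cases hl : (l : ℕ) = k
      · simp [hl, Fin.ext_iff]
      · simp [hl, Fin.ext_iff]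
  · rw [Finset.sum_eq_zero]
    intro l _
    have : (l : ℕ) ≠ k := by omega
    simp [this]

private lemma conjid' {n : ℕ} (a : Matrix (Fin (n+1)) (Fin (n+1)) ℂ)
    (ha : ∀ i j : Fin (n+1),
      a i j = if (j : ℕ) = (i : ℕ) + 1 then (Real.sqrt (j : ℕ) : ℂ) else 0)
    (u : ℂ) (hu : starRingEnd ℂ u * u = 1) :
    (u • aᴴ - starRingEnd ℂ u • a) * diagonal (fun k : Fin (n+1) => u ^ (k : ℕ))
      = diagonal (fun k : Fin (n+1) => u ^ (k : ℕ)) * (aᴴ - a) := by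
  have haT : ∀ i j : Fin (n+1),
      aᴴ i j = if (i : ℕ) = (j : ℕ) + 1 then (Real.sqrt (i : ℕ) : ℂ) else 0 := by
    intro i j
    rw [Matrix.conjTranspose_apply, ha]
    split_ifs <;> simp [Complex.star_def, Complex.conj_ofReal]
  ext i j
  simp only [Matrix.mul_diagonal, Matrix.diagonal_mul, Matrix.sub_apply, Matrix.smul_apply,
    haT, ha, smul_eq_mul]
  by_cases h1 : (i : ℕ) = (j : ℕ) + 1
  · have h2 : ¬ ((j : ℕ) = (i : ℕ) + 1) := by omega
    simp only [h1, h2, if_true, if_false]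
    have h3 : ¬ ((j : ℕ) = (j : ℕ) + 1 + 1) := by omega
    simp only [h3, if_false]
    rw [pow_succ]; ring
  · by_cases h2 : (j : ℕ) = (i : ℕ) + 1
    · have h3 : ¬ ((i : ℕ) = (i : ℕ) + 1 + 1) := by omega
      simp only [h1, h2, h3, if_true, if_false]
      rw [pow_succ]
      push_cast
      linear_combination (-(Real.sqrt ((i : ℕ) + 1) : ℂ) * u ^ (i : ℕ)) * hu
    · simp [h1, h2]

/-- If a vector `ψ` is orthogonal to `D_α|n̄⟩` for every `α ∈ ℂ`, then `ψ = 0`;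
hence a nonzero such `ψ` is contradictory, i.e. the family `{D_α|n̄⟩}` spans. -/
theorem stmt16 (nmax : ℕ) (nbar : Fin (nmax + 1))
    (a : Matrix (Fin (nmax + 1)) (Fin (nmax + 1)) ℂ)
    (ha : ∀ i j : Fin (nmax + 1),
      a i j = if (j : ℕ) = (i : ℕ) + 1 then (Real.sqrt (j : ℕ) : ℂ) else 0)
    (D : ℂ → Matrix (Fin (nmax + 1)) (Fin (nmax + 1)) ℂ)
    (hD : ∀ α : ℂ, D α = NormedSpace.exp (α • aᴴ - (starRingEnd ℂ α) • a))
    (ψ : Fin (nmax + 1) → ℂ) (hψ : ψ ≠ 0)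
    (horth : ∀ α : ℂ,
      star ψ ⬝ᵥ (D α).mulVec (Pi.single nbar (1 : ℂ)) = 0) :
    False := by
  classical
  set v : Fin (nmax + 1) → ℂ := Pi.single nbar (1 : ℂ) with hvdef
  set Q : Matrix (Fin (nmax + 1)) (Fin (nmax + 1)) ℂ := aᴴ - a with hQdef
  set w : ℕ → Fin (nmax + 1) → ℂ := fun j => (Q ^ j).mulVec v with hwdef
  -- the linear functional
  set c : Matrix (Fin (nmax + 1)) (Fin (nmax + 1)) ℂ →ₗ[ℂ] ℂ :=
    { toFun := fun X => star ψ ⬝ᵥ X.mulVec v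
      map_add' := by intro X Y; simp [Matrix.add_mulVec, dotProduct_add]
      map_smul' := by intro r X; simp [Matrix.smul_mulVec, dotProduct_smul] } with hcdef
  -- Step A
  have hA : ∀ (u : ℂ) (j : ℕ),
      star ψ ⬝ᵥ ((u • aᴴ - starRingEnd ℂ u • a) ^ j).mulVec v = 0 := by
    intro u j
    refine keyA' (u • aᴴ - starRingEnd ℂ u • a) c ?_ j
    intro t
    have harg : (t : ℂ) • (u • aᴴ - starRingEnd ℂ u • a)
        = ((t : ℂ) * u) • aᴴ - (starRingEnd ℂ ((t : ℂ) * u)) • a := by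
      rw [smul_sub, smul_smul, smul_smul]
      congr 2
      rw [RingHom.map_mul]
      simp [Complex.conj_ofReal]
    show star ψ ⬝ᵥ (NormedSpace.exp ((t : ℂ) • (u • aᴴ - starRingEnd ℂ u • a))).mulVec v = 0
    rw [harg, ← hD, horth]
  -- Step B : circle sums
  have hB : ∀ (j : ℕ) (u : ℂ), starRingEnd ℂ u * u = 1 →
      ∑ m : Fin (nmax + 1), star (ψ m) * (u ^ (m : ℕ) * w j m) = 0 := by
    intro j u hu
    set U : Matrix (Fin (nmax + 1)) (Fin (nmax + 1)) ℂ :=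
      diagonal (fun k : Fin (nmax + 1) => u ^ (k : ℕ)) with hUdef
    have hpow : (u • aᴴ - starRingEnd ℂ u • a) ^ j * U = U * Q ^ j :=
      pow_conj' (conjid' a ha u hu) j
    have hUv : U.mulVec v = u ^ (nbar : ℕ) • v := by
      rw [hvdef, hUdef, diagonal_mulVec_single]
      ext k
      by_cases hk : k = nbar
      · subst hk; simp
      · simp [Pi.single_apply, hk]
    have h1 : star ψ ⬝ᵥ ((u • aᴴ - starRingEnd ℂ u • a) ^ j * U).mulVec v = 0 := by
      rw [← Matrix.mulVec_mulVec, hUv, Matrix.mulVec_smul, dotProduct_smul, hA, smul_zero]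
    rw [hpow] at h1
    rw [← Matrix.mulVec_mulVec] at h1
    calc ∑ m : Fin (nmax + 1), star (ψ m) * (u ^ (m : ℕ) * w j m)
        = star ψ ⬝ᵥ U.mulVec (w j) := by
          simp only [dotProduct, Matrix.mulVec_diagonal, hUdef, Pi.star_apply]
      _ = 0 := h1
  -- Step B' : each term vanishes
  have hC : ∀ (j : ℕ) (m : Fin (nmax + 1)), star (ψ m) * w j m = 0 := by
    intro j m
    set p : Polynomial ℂ :=
      ∑ l : Fin (nmax + 1), Polynomial.C (star (ψ l) * w j l) * Polynomial.X ^ (l : ℕ) with hpdef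
    have hroots : ∀ θ : ℝ, p.IsRoot (Complex.exp (θ * Complex.I)) := by
      intro θ
      have hu : starRingEnd ℂ (Complex.exp (θ * Complex.I)) * Complex.exp (θ * Complex.I) = 1 := by
        rw [← Complex.exp_conj, ← Complex.exp_add]
        simp [Complex.conj_ofReal]
      have hb := hB j _ hu
      rw [Polynomial.IsRoot, hpdef]
      rw [Polynomial.eval_finset_sum]
      rw [← hb]
      refine Finset.sum_congr rfl (fun l _ => ?_)
      simp [mul_comm, mul_assoc, mul_left_comm]
    have hinf : Set.Infinite {x : ℂ | p.IsRoot x} := by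
      have hinj : Set.InjOn (fun θ : ℝ => Complex.exp (θ * Complex.I)) (Set.Ioo 0 1) := by
        intro θ₁ h₁ θ₂ h₂ hee
        obtain ⟨k, hk⟩ := Complex.exp_eq_exp_iff_exists_int.mp hee
        have him := congrArg Complex.im hk
        simp [Complex.add_im, Complex.mul_im, Complex.ofReal_re, Complex.ofReal_im,
          Complex.I_re, Complex.I_im] at him
        have hpi := Real.pi_gt_three
        rcases lt_trichotomy k 0 with hk0 | hk0 | hk0
        · exfalso
          have hk1 : (k : ℝ) ≤ -1 := by
            have h' : k ≤ -1 := by omega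
            exact_mod_cast h'
          nlinarith [h₁.1, h₁.2, h₂.1, h₂.2]
        · subst hk0; simpa using him
        · exfalso
          have hk1 : (1 : ℝ) ≤ (k : ℝ) := by exact_mod_cast hk0
          nlinarith [h₁.1, h₁.2, h₂.1, h₂.2]
      have himg : ((fun θ : ℝ => Complex.exp (θ * Complex.I)) '' (Set.Ioo 0 1)).Infinite :=
        (Set.Ioo_infinite (by norm_num : (0:ℝ) < 1)).image hinj
      refine himg.mono ?_
      rintro x ⟨θ, _, rfl⟩
      exact hroots θ
    have hp0 : p = 0 := p.eq_zero_of_infinite_isRoot hinf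
    have hcoeff := congrArg (fun q => Polynomial.coeff q (m : ℕ)) hp0
    simp only [hpdef, Polynomial.finset_sum_coeff, Polynomial.coeff_C_mul,
      Polynomial.coeff_X_pow, Polynomial.coeff_zero] at hcoeff
    rw [Finset.sum_eq_single m] at hcoeff
    · simpa using hcoeff
    · intro b _ hb
      have : (m : ℕ) ≠ (b : ℕ) := fun h => hb (Fin.ext h.symm)
      simp [this]
    · intro h; exact absurd (Finset.mem_univ m) h
  -- entries of Q
  have hQ : ∀ i l : Fin (nmax + 1), Q i l
      = (if (i : ℕ) = (l : ℕ) + 1 then (Real.sqrt (i : ℕ) : ℂ) else 0)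
        - (if (l : ℕ) = (i : ℕ) + 1 then (Real.sqrt ((i : ℕ) + 1) : ℂ) else 0) := by
    intro i l
    rw [hQdef, Matrix.sub_apply, Matrix.conjTranspose_apply, ha, ha]
    congr 1
    · split_ifs <;> simp [Complex.star_def, Complex.conj_ofReal]
    · by_cases h : (l : ℕ) = (i : ℕ) + 1
      · simp [h]
      · simp [h]
  -- ℕ-indexed entries
  set W : ℕ → ℕ → ℂ := fun j m => if h : m < nmax + 1 then w j ⟨m, h⟩ else 0 with hWdef
  have hW0 : ∀ j m (h : m < nmax + 1), W j m = w j ⟨m, h⟩ := by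
    intro j m h; rw [hWdef]; simp [h]
  have hWbig : ∀ j m, ¬ (m < nmax + 1) → W j m = 0 := by
    intro j m h; rw [hWdef]; simp [h]
  -- recurrence
  have hrec : ∀ j m, m < nmax + 1 →
      W (j+1) m = (Real.sqrt m : ℂ) * W j (m - 1) - (Real.sqrt (m + 1) : ℂ) * W j (m + 1) := by
    intro j m hm
    rw [hW0 (j+1) m hm]
    have : w (j+1) = Q.mulVec (w j) := by
      rw [hwdef]
      simp only []
      rw [pow_succ', ← Matrix.mulVec_mulVec]
    rw [this]
    have hexp : Q.mulVec (w j) ⟨m, hm⟩ = ∑ l : Fin (nmax+1), Q ⟨m, hm⟩ l * w j l := by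
      simp [Matrix.mulVec, dotProduct]
    rw [hexp]
    have : ∀ l : Fin (nmax+1), Q ⟨m, hm⟩ l * w j l
        = (if (m : ℕ) = (l : ℕ) + 1 then (Real.sqrt m : ℂ) else 0) * w j l
          - (if (l : ℕ) = m + 1 then (Real.sqrt (m + 1) : ℂ) else 0) * w j l := by
      intro l
      rw [hQ ⟨m, hm⟩ l, sub_mul]
    rw [Finset.sum_congr rfl (fun l _ => this l), Finset.sum_sub_distrib]
    congr 1
    · -- first sum
      rcases Nat.eq_zero_or_pos m with h0 | h0
      · subst h0
        rw [Finset.sum_eq_zero (fun l _ => by simp)]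
        simp
      · obtain ⟨k, rfl⟩ : ∃ k, m = k + 1 := ⟨m - 1, by omega⟩
        calc (∑ l : Fin (nmax+1), (if (k + 1 : ℕ) = (l : ℕ) + 1
                then (Real.sqrt ((k + 1 : ℕ)) : ℂ) else 0) * w j l)
            = ∑ l : Fin (nmax+1), (if (l : ℕ) = k
                then (Real.sqrt ((k + 1 : ℕ)) : ℂ) else 0) * w j l := by
              refine Finset.sum_congr rfl (fun l _ => ?_)
              by_cases hl : (l : ℕ) = k
              · have : (k + 1 : ℕ) = (l : ℕ) + 1 := by omega
                simp [hl, this]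
              · have : ¬ ((k + 1 : ℕ) = (l : ℕ) + 1) := by omega
                simp [hl, this, Ne.symm hl]
          _ = (Real.sqrt ((k + 1 : ℕ)) : ℂ) * W j k := by
              rw [sum_pick']
              have hk : k < nmax + 1 := by omega
              rw [dif_pos hk, hW0 j k hk]
    · -- second sum
      rw [sum_pick']
      split_ifs with h
      · rw [hW0 j (m+1) h]
      · rw [hWbig j (m+1) h, mul_zero]
  -- main induction
  have main : ∀ j : ℕ,
      (∀ m, (m + j < (nbar : ℕ) ∨ (nbar : ℕ) + j < m) → W j m = 0)
      ∧ ((nbar : ℕ) + j ≤ nmax → ∃ cr : ℝ, 0 < cr ∧ W j ((nbar : ℕ) + j) = (cr : ℂ))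
      ∧ (j ≤ (nbar : ℕ) → ∃ cr : ℝ, cr ≠ 0 ∧ W j ((nbar : ℕ) - j) = (cr : ℂ)) := by
    intro j
    induction j with
    | zero =>
      have hw0 : w 0 = v := by rw [hwdef]; simp [Matrix.one_mulVec]
      refine ⟨?_, ?_, ?_⟩
      · intro m hm
        by_cases h : m < nmax + 1
        · rw [hW0 0 m h, hw0, hvdef]
          have : (⟨m, h⟩ : Fin (nmax+1)) ≠ nbar := by
            intro he
            have := congrArg Fin.val he
            simp at this
            omega
          simp [Pi.single_apply, this]
        · exact hWbig 0 m h
      · intro _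
        refine ⟨1, one_pos, ?_⟩
        have h : (nbar : ℕ) + 0 < nmax + 1 := by omega
        rw [hW0 0 _ h, hw0, hvdef]
        have : (⟨(nbar : ℕ) + 0, h⟩ : Fin (nmax+1)) = nbar := by
          apply Fin.ext; simp
        simp [this]
      · intro _
        refine ⟨1, one_ne_zero, ?_⟩
        have h : (nbar : ℕ) - 0 < nmax + 1 := by omega
        rw [hW0 0 _ h, hw0, hvdef]
        have : (⟨(nbar : ℕ) - 0, h⟩ : Fin (nmax+1)) = nbar := by
          apply Fin.ext; simp
        simp [this]
    | succ j ih =>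
      obtain ⟨ihP, ihU, ihL⟩ := ih
      refine ⟨?_, ?_, ?_⟩
      · intro m hm
        by_cases h : m < nmax + 1
        · rw [hrec j m h]
          have hz1 : W j (m - 1) = 0 := by
            rcases Nat.eq_zero_or_pos m with h0 | h0
            · subst h0
              apply ihP
              omega
            · apply ihP; omega
          have hz2 : W j (m + 1) = 0 := by apply ihP; omega
          rw [hz1, hz2]; ring
        · exact hWbig _ m h
      · intro hle
        have hmlt : (nbar : ℕ) + (j + 1) < nmax + 1 := by omega
        rw [show (nbar : ℕ) + (j + 1) = ((nbar : ℕ) + j + 1) from by omega] at hmlt ⊢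
        rw [hrec j _ hmlt]
        obtain ⟨cr, hcr, hW⟩ := ihU (by omega)
        have hz : W j ((nbar : ℕ) + j + 1 + 1) = 0 := by apply ihP; omega
        rw [show (nbar : ℕ) + j + 1 - 1 = (nbar : ℕ) + j from by omega, hW, hz]
        refine ⟨Real.sqrt ((nbar : ℕ) + j + 1) * cr, ?_, ?_⟩
        · have : (0:ℝ) < Real.sqrt ((nbar : ℕ) + j + 1) := by
            apply Real.sqrt_pos.mpr; positivity
          positivity
        · push_cast
          ring
      · intro hle
        set m : ℕ := (nbar : ℕ) - (j + 1) with hmdef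
        have hmlt : m < nmax + 1 := by omega
        rw [hrec j m hmlt]
        obtain ⟨cr, hcr, hW⟩ := ihL (by omega)
        have hm1 : m + 1 = (nbar : ℕ) - j := by omega
        rw [hm1, hW]
        have hz : (Real.sqrt m : ℂ) * W j (m - 1) = 0 := by
          rcases Nat.eq_zero_or_pos m with h0 | h0
          · rw [h0]; simp
          · have : W j (m - 1) = 0 := by apply ihP; omega
            rw [this, mul_zero]
        rw [hz]
        refine ⟨-(Real.sqrt (((nbar : ℕ) - j : ℕ)) * cr), ?_, ?_⟩
        · have h' : 0 < (nbar : ℕ) - j := by omega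
          have hs : (0:ℝ) < Real.sqrt (((nbar : ℕ) - j : ℕ)) :=
            Real.sqrt_pos.mpr (by exact_mod_cast h')
          intro hcontra
          rcases mul_eq_zero.mp (neg_eq_zero.mp hcontra) with h | h
          · exact absurd h (ne_of_gt hs)
          · exact hcr h
        · have harg : ((((nbar : ℕ) - j : ℕ)) : ℝ) = (m : ℝ) + 1 := by
            rw [← hm1]; push_cast; ring
          push_cast
          rw [harg]
          ring
  -- conclude
  obtain ⟨m₀, hm₀⟩ := Function.ne_iff.mp hψ
  have hstar : star (ψ m₀) ≠ 0 := star_ne_zero.mpr hm₀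
  have hwz : ∀ j, W j (m₀ : ℕ) = 0 := by
    intro j
    have := hC j m₀
    have hwj : w j m₀ = 0 := by
      rcases mul_eq_zero.mp this with h | h
      · exact absurd h hstar
      · exact h
    rw [hW0 j (m₀ : ℕ) m₀.isLt]
    simpa [Fin.eta] using hwj
  rcases le_or_gt (nbar : ℕ) (m₀ : ℕ) with hle | hlt
  · obtain ⟨cr, hcr, hW⟩ := (main ((m₀ : ℕ) - (nbar : ℕ))).2.1 (by omega)
    rw [show (nbar : ℕ) + ((m₀ : ℕ) - (nbar : ℕ)) = (m₀ : ℕ) from by omega] at hW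
    rw [hwz _] at hW
    exact absurd (Complex.ofReal_eq_zero.mp hW.symm) (ne_of_gt hcr)
  · obtain ⟨cr, hcr, hW⟩ := (main ((nbar : ℕ) - (m₀ : ℕ))).2.2 (by omega)
    rw [show (nbar : ℕ) - ((nbar : ℕ) - (m₀ : ℕ)) = (m₀ : ℕ) from by omega] at hW
    rw [hwz _] at hW
    exact absurd (Complex.ofReal_eq_zero.mp hW.symm) hcr
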